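/- Let β > 1 and for n ≥ 1 define t_n(β) = max{k ≥ 1 : ε*_{n+1}(β) = ⋯ = ε*_{n+k}(β) = 0} (with t_n = 0 if no such k), and Γ_n(β) = max_{1 ≤ k ≤ n} t_k(β). Then Γ_n(β) is finite for every n ≥ 1, and for every admissible word (ω_1,…,ω_n), the word (ω_1,…,ω_n,0^{Γ_n(β)+1}) is full. -/

import Mathlib

open Filter MeasureTheory Set

open Filter MeasureTheory Set

noncomputable def betaT (β : ℝ) (x : ℝ) : ℝ := β * x - ⌊β * x⌋

noncomputable def eps (β x : ℝ) (n : ℕ) : ℤ := ⌊β * (betaT β)^[n - 1] x⌋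

noncomputable def runLen (β x : ℝ) (n : ℕ) : ℕ :=
  sSup {j | ∃ i, i + j ≤ n ∧ ∀ k < j, eps β x (i + k + 1) = 0}

def isAdmissible (β : ℝ) (n : ℕ) (ω : ℕ → ℤ) : Prop :=
  ∃ x ∈ Set.Ico (0 : ℝ) 1, ∀ k < n, eps β x (k + 1) = ω k

def cylinder (β : ℝ) (n : ℕ) (ω : ℕ → ℤ) : Set ℝ :=
  {x | x ∈ Set.Ico (0 : ℝ) 1 ∧ ∀ k < n, eps β x (k + 1) = ω k}

def isFull (β : ℝ) (n : ℕ) (ω : ℕ → ℤ) : Prop :=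
  MeasureTheory.volume (cylinder β n ω) = ENNReal.ofReal (β ^ (-(n : ℤ)))

open Classical in
noncomputable def epsStar (β : ℝ) : ℕ → ℤ :=
  if h : ∃ m, 1 ≤ m ∧ eps β 1 m ≠ 0 ∧ ∀ k, m < k → eps β 1 k = 0 then
    fun n =>
      if (n - 1) % Nat.find h + 1 = Nat.find h then eps β 1 (Nat.find h) - 1
      else eps β 1 ((n - 1) % Nat.find h + 1)
  else eps β 1

def lexLt (u v : ℕ → ℤ) : Prop := ∃ j, (∀ k < j, u k = v k) ∧ u j < v j

def lexLe (u v : ℕ → ℤ) : Prop := lexLt u v ∨ u = v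

noncomputable def vbeta (β x : ℝ) : ℝ :=
  sSup {v | 0 ≤ v ∧ ∃ᶠ n : ℕ in atTop, (betaT β)^[n] x ≤ β ^ (-((n : ℝ) * v))}

noncomputable def hatv (β x : ℝ) : ℝ :=
  sSup {v | 0 ≤ v ∧ ∀ᶠ N : ℕ in atTop, ∃ n, 1 ≤ n ∧ n ≤ N ∧ (betaT β)^[n] x ≤ β ^ (-(v * (N : ℝ)))}

section basic
variable {β x : ℝ} (hβ : 1 < β)

lemma betaT_eq_fract (β x : ℝ) : betaT β x = Int.fract (β * x) := rfl

lemma betaT_mem (β x : ℝ) : betaT β x ∈ Set.Ico (0:ℝ) 1 :=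
  ⟨Int.fract_nonneg _, Int.fract_lt_one _⟩

lemma iter_mem (h : x ∈ Set.Ico (0:ℝ) 1) (k : ℕ) : (betaT β)^[k] x ∈ Set.Ico (0:ℝ) 1 := by
  cases k with
  | zero => exact h
  | succ k => rw [Function.iterate_succ_apply']; exact betaT_mem _ _

lemma iter_mem' (k : ℕ) (hk : 1 ≤ k) : (betaT β)^[k] x ∈ Set.Ico (0:ℝ) 1 := by
  obtain ⟨j, rfl⟩ := Nat.exists_eq_add_of_le hk
  rw [add_comm, Function.iterate_succ_apply']; exact betaT_mem _ _

lemma eps_succ (β x : ℝ) (k : ℕ) : eps β x (k+1) = ⌊β * (betaT β)^[k] x⌋ := by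
  simp [eps]

lemma iter_step (β x : ℝ) (k : ℕ) :
    (betaT β)^[k+1] x = β * (betaT β)^[k] x - eps β x (k+1) := by
  rw [Function.iterate_succ_apply', eps_succ]; rfl

lemma eps_nonneg (hβ : 0 < β) (hx : 0 ≤ x) (k : ℕ) : 0 ≤ eps β x (k+1) := by
  rw [eps_succ]
  apply Int.floor_nonneg.2
  apply mul_nonneg hβ.le
  cases k with
  | zero => exact hx
  | succ k => exact (iter_mem' (k+1) (by omega)).1

/-- Telescoping formula. -/
lemma iter_formula (β x : ℝ) (hβ : 0 < β) (k : ℕ) :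
    (betaT β)^[k] x = β ^ (k:ℤ) * (x - ∑ i ∈ Finset.range k, (eps β x (i+1) : ℝ) * β ^ (-(i+1:ℤ))) := by
  induction k with
  | zero => simp
  | succ k ih =>
    rw [iter_step, ih, Finset.sum_range_succ]
    have hb : (β:ℝ) ≠ 0 := ne_of_gt hβ
    push_cast
    have h1 : β ^ ((k:ℤ)+1) = β ^ (k:ℤ) * β := by
      rw [zpow_add₀ hb]; simp
    have h2 : β ^ (-((k:ℤ)+1)) = (β ^ (k:ℤ) * β)⁻¹ := by rw [← h1, zpow_neg]
    have h3 : (β:ℝ) ^ (k:ℤ) ≠ 0 := zpow_ne_zero _ hb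
    rw [h1, h2]
    field_simp
    ring
end basic

section basic2
variable {β x : ℝ}

lemma iter_nonneg (hx : 0 ≤ x) (k : ℕ) : 0 ≤ (betaT β)^[k] x := by
  cases k with
  | zero => exact hx
  | succ k => exact (iter_mem' (k+1) (by omega)).1

lemma eps_shift (β x : ℝ) (k i : ℕ) :
    eps β ((betaT β)^[k] x) (i+1) = eps β x (k+i+1) := by
  rw [eps_succ, eps_succ, ← Function.iterate_add_apply, Nat.add_comm i k]

lemma sum_le_self (hβ : 0 < β) (hx : 0 ≤ x) (k : ℕ) :
    ∑ i ∈ Finset.range k, (eps β x (i+1) : ℝ) * β ^ (-(i+1:ℤ)) ≤ x := by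
  have h := iter_formula β x hβ k
  have h2 : 0 ≤ (betaT β)^[k] x := iter_nonneg hx k
  rw [h] at h2
  have h3 : (0:ℝ) < β ^ (k:ℤ) := zpow_pos hβ _
  nlinarith [mul_pos h3 h3]

lemma pow_iter (β x : ℝ) (m : ℕ) (h0 : ∀ i, eps β x (m+i+1) = 0) (i : ℕ) :
    (betaT β)^[m+i] x = β ^ i * (betaT β)^[m] x := by
  induction i with
  | zero => simp
  | succ i ih =>
    have := iter_step β x (m+i)
    rw [show m + (i+1) = (m+i)+1 by omega, this, ih, h0 i]
    push_cast
    ring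

lemma pos_digit (hβ : 1 < β) (m : ℕ) (hm : 1 ≤ m) (hpos : 0 < (betaT β)^[m] x) :
    ∃ i, eps β x (m+i+1) ≠ 0 := by
  by_contra hc
  push_neg at hc
  obtain ⟨i, hi⟩ := pow_unbounded_of_one_lt (((betaT β)^[m] x)⁻¹) hβ
  have h1 : (1:ℝ) ≤ (betaT β)^[m+i] x := by
    rw [pow_iter β x m hc i]
    rw [inv_lt_iff_one_lt_mul₀ hpos] at hi
    nlinarith
  have h2 : (betaT β)^[m+i] x < 1 := (iter_mem' (m+i) (by omega)).2
  linarith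

lemma iter_zero (β : ℝ) (k : ℕ) : (betaT β)^[k] 0 = 0 := by
  induction k with
  | zero => rfl
  | succ k ih => rw [Function.iterate_succ_apply', ih, betaT_eq_fract, mul_zero, Int.fract_zero]

lemma eps_one_one (hβ : 0 < β) : eps β 1 1 = ⌊β⌋ := by
  rw [eps_succ]; norm_num

lemma eps_one_one_pos (hβ : 1 < β) : 1 ≤ eps β 1 1 := by
  rw [eps_one_one (by linarith)]
  exact_mod_cast Int.le_floor.2 (by exact_mod_cast hβ.le)

/-- partial sums of the expansion of 1. -/
lemma sum_one (hβ : 0 < β) (k : ℕ) :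
    ∑ i ∈ Finset.range k, (eps β 1 (i+1) : ℝ) * β ^ (-(i+1:ℤ)) =
      1 - β ^ (-(k:ℤ)) * (betaT β)^[k] 1 := by
  have h := iter_formula β 1 hβ k
  have h3 : (β:ℝ) ^ (k:ℤ) ≠ 0 := zpow_ne_zero _ (ne_of_gt hβ)
  rw [h, zpow_neg]
  field_simp
  ring

end basic2

section star
open Classical
variable {β : ℝ}

abbrev Fin1 (β : ℝ) : Prop :=
  ∃ m, 1 ≤ m ∧ eps β 1 m ≠ 0 ∧ ∀ k, m < k → eps β 1 k = 0

lemma epsStar_of_not (hc : ¬ Fin1 β) : epsStar β = eps β 1 := by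
  rw [epsStar, dif_neg hc]

open Classical in
lemma epsStar_of_fin (hc : Fin1 β) (q : ℕ) :
    epsStar β q = if (q - 1) % Nat.find hc + 1 = Nat.find hc then eps β 1 (Nat.find hc) - 1
      else eps β 1 ((q - 1) % Nat.find hc + 1) := by
  rw [epsStar, dif_pos hc]

lemma Tp_zero (hβ : 1 < β) (hc : Fin1 β) : (betaT β)^[Nat.find hc] 1 = 0 := by
  obtain ⟨hp1, hpne, hptail⟩ := Nat.find_spec hc
  by_contra hne
  have hpos : 0 < (betaT β)^[Nat.find hc] 1 :=
    lt_of_le_of_ne (iter_nonneg zero_le_one _) (Ne.symm hne)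
  obtain ⟨i, hi⟩ := pos_digit hβ (Nat.find hc) hp1 hpos
  exact hi (hptail _ (by omega))

lemma epsStar_low (hc : Fin1 β) {q : ℕ} (hq1 : 1 ≤ q) (hq : q < Nat.find hc) :
    epsStar β q = eps β 1 q := by
  rw [epsStar_of_fin hc]
  have h1 : (q - 1) % Nat.find hc = q - 1 := Nat.mod_eq_of_lt (by omega)
  rw [h1, if_neg (by omega), show q - 1 + 1 = q by omega]

lemma exists_epsStar_ne (hβ : 1 < β) (m : ℕ) (hm : 1 ≤ m) :
    ∃ i, epsStar β (m + i + 1) ≠ 0 := by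
  by_cases hc : Fin1 β
  · set p := Nat.find hc with hp
    obtain ⟨hp1, hpne, hptail⟩ := Nat.find_spec hc
    refine ⟨m * p - m, ?_⟩
    have hq : m + (m * p - m) + 1 = m * p + 1 := by
      have : m ≤ m * p := Nat.le_mul_of_pos_right m (by omega)
      omega
    rw [hq, epsStar_of_fin hc]
    have hmod : (m * p + 1 - 1) % p = 0 := by
      simp [Nat.mul_mod_left]
    rw [← hp, hmod]
    by_cases hp2 : p = 1
    · rw [if_pos (by omega)]
      have hT : (betaT β)^[p] 1 = 0 := Tp_zero hβ hc
      rw [hp2] at hT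
      have h1 : (betaT β)^[1] 1 = β * 1 - eps β 1 1 := by
        simpa using iter_step β 1 0
      have h2 : (β:ℝ) = (eps β 1 1 : ℝ) := by rw [h1] at hT; linarith
      have h3 : (1:ℤ) < eps β 1 1 := by exact_mod_cast h2 ▸ hβ
      rw [hp2]
      omega
    · rw [if_neg (by omega)]
      have h4 := eps_one_one_pos hβ
      norm_num
      omega
  · rw [epsStar_of_not hc]
    by_contra hall
    push_neg at hall
    apply hc
    set m' := Nat.findGreatest (fun k => eps β 1 k ≠ 0) m with hm'
    have h1 : eps β 1 1 ≠ 0 := by have := eps_one_one_pos hβ; omega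
    have hm'1 : 1 ≤ m' := Nat.le_findGreatest hm h1
    refine ⟨m', hm'1, Nat.findGreatest_spec (P := fun k => eps β 1 k ≠ 0) hm h1, fun k hk => ?_⟩
    by_cases hkm : k ≤ m
    · by_contra hkne
      exact (Nat.findGreatest_is_greatest hk hkm) hkne
    · have : m + (k - m - 1) + 1 = k := by omega
      rw [← this]; exact hall _

lemma bddAbove_S (hβ : 1 < β) (m : ℕ) (hm : 1 ≤ m) :
    BddAbove {k : ℕ | ∀ i < k, epsStar β (m + i + 1) = 0} := by
  obtain ⟨i, hi⟩ := exists_epsStar_ne hβ m hm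
  refine ⟨i, fun k hk => ?_⟩
  by_contra hik
  exact hi (hk i (by omega))

lemma pow_iter_upto (β x : ℝ) (m i : ℕ) (h0 : ∀ l < i, eps β x (m+l+1) = 0) :
    (betaT β)^[m+i] x = β ^ i * (betaT β)^[m] x := by
  induction i with
  | zero => simp
  | succ i ih =>
    have hs := iter_step β x (m+i)
    rw [show m + (i+1) = (m+i)+1 by omega, hs, ih (fun l hl => h0 l (by omega)),
      h0 i (by omega)]
    push_cast
    ring

/-- Key lemma: if T^m 1 > 0 then there is i0 in S_m with β^{-(i0+1)} ≤ T^m 1. -/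
lemma key_lemma (hβ : 1 < β) (m : ℕ) (hm : 1 ≤ m) (hpos : 0 < (betaT β)^[m] 1) :
    ∃ i0 : ℕ, (∀ l < i0, epsStar β (m + l + 1) = 0) ∧
      β ^ (-(i0+1:ℤ)) ≤ (betaT β)^[m] 1 := by
  have hβ0 : (0:ℝ) < β := by linarith
  have hex := pos_digit hβ m hm hpos
  set i0 := Nat.find hex with hi0
  have hne : eps β 1 (m + i0 + 1) ≠ 0 := Nat.find_spec hex
  have hmin : ∀ l < i0, eps β 1 (m + l + 1) = 0 := fun l hl => by
    have := Nat.find_min hex hl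
    simpa using this
  refine ⟨i0, ?_, ?_⟩
  · -- i0 ∈ S_m
    intro l hl
    by_cases hc : Fin1 β
    · set p := Nat.find hc with hp
      obtain ⟨hp1, hpne, hptail⟩ := Nat.find_spec hc
      have hmp : m < p := by
        by_contra hmp
        push_neg at hmp
        have : (betaT β)^[m] 1 = 0 := by
          rw [show m = (m - p) + p by omega, Function.iterate_add_apply,
            Tp_zero hβ hc, iter_zero]
        linarith
      have hi0p : i0 ≤ p - m - 1 := by
        apply Nat.find_min' hex
        rw [show m + (p - m - 1) + 1 = p by omega]
        exact hpne
      have hql : m + l + 1 < p := by omega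
      rw [epsStar_low hc (by omega) hql]
      exact hmin l hl
    · rw [epsStar_of_not hc]
      exact hmin l hl
  · -- quantitative bound
    have hit : (betaT β)^[m + i0] 1 = β ^ i0 * (betaT β)^[m] 1 :=
      pow_iter_upto β 1 m i0 hmin
    have hge : (1:ℤ) ≤ eps β 1 (m + i0 + 1) := by
      have := eps_nonneg hβ0 (zero_le_one) (m + i0)
      rw [show m + i0 + 1 = (m+i0) + 1 by omega] at hne ⊢
      omega
    have hfl : (1:ℝ) ≤ β * (betaT β)^[m+i0] 1 := by
      have h2 : (1:ℝ) ≤ (eps β 1 ((m+i0) + 1) : ℝ) := by exact_mod_cast hge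
      have h3 := Int.floor_le (β * (betaT β)^[m+i0] 1)
      rw [eps_succ] at h2
      linarith
    rw [hit] at hfl
    rw [zpow_neg, inv_le_iff_one_le_mul₀ (zpow_pos hβ0 _)]
    calc (1:ℝ) ≤ β * (β ^ i0 * (betaT β)^[m] 1) := hfl
    _ = β ^ ((i0:ℤ)+1) * (betaT β)^[m] 1 := by
        rw [zpow_add₀ (ne_of_gt hβ0), zpow_one, zpow_natCast]; ring
    _ = β ^ (i0+1:ℤ) * (betaT β)^[m] 1 := by push_cast; ring
    _ = (betaT β)^[m] 1 * β ^ (i0+1:ℤ) := by ring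
end star

section dich
open Classical
variable {β : ℝ}

lemma zpow_neg_le_one (hβ : 1 < β) (k : ℕ) : β ^ (-(k:ℤ)) ≤ 1 := by
  rw [zpow_neg]
  apply inv_le_one_of_one_le₀
  exact one_le_zpow₀ hβ.le (by positivity)

lemma zpow_neg_anti (hβ : 1 < β) {a b : ℤ} (hab : a ≤ b) : β ^ (-b) ≤ β ^ (-a) :=
  zpow_le_zpow_right₀ hβ.le (by omega)

lemma dichotomy (hβ : 1 < β) {x : ℝ} (hx : x ∈ Set.Ico (0:ℝ) 1) (m : ℕ) :
    (∀ i < m, eps β x (i+1) = eps β 1 (i+1)) ∨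
    ∃ j < m, (∀ i < j, eps β x (i+1) = eps β 1 (i+1)) ∧ eps β x (j+1) < eps β 1 (j+1) := by
  have hβ0 : (0:ℝ) < β := by linarith
  by_cases hall : ∀ i < m, eps β x (i+1) = eps β 1 (i+1)
  · exact Or.inl hall
  · right
    push_neg at hall
    have hex : ∃ j, j < m ∧ eps β x (j+1) ≠ eps β 1 (j+1) := hall
    set j := Nat.find hex with hj
    obtain ⟨hjm, hne⟩ := Nat.find_spec hex
    have heq : ∀ i < j, eps β x (i+1) = eps β 1 (i+1) := by
      intro i hi
      have := Nat.find_min hex hi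
      push_neg at this
      exact this (by omega)
    refine ⟨j, hjm, heq, ?_⟩
    rcases lt_or_gt_of_ne hne with h | h
    · exact h
    exfalso
    -- x > 1 contradiction
    have h1 : ∑ i ∈ Finset.range (j+1), (eps β x (i+1) : ℝ) * β ^ (-(i+1:ℤ)) ≤ x :=
      sum_le_self hβ0 hx.1 (j+1)
    rw [Finset.sum_range_succ] at h1
    have h2 : ∑ i ∈ Finset.range j, (eps β x (i+1) : ℝ) * β ^ (-(i+1:ℤ)) =
        1 - β ^ (-(j:ℤ)) * (betaT β)^[j] 1 := by
      rw [Finset.sum_congr rfl (fun i hi => by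
        rw [heq i (Finset.mem_range.1 hi)]), sum_one hβ0]
    have h3 : (eps β 1 (j+1) : ℝ) + 1 > β * (betaT β)^[j] 1 := by
      rw [eps_succ]
      exact Int.lt_floor_add_one _
    have h4 : (eps β 1 (j+1) : ℝ) + 1 ≤ (eps β x (j+1) : ℝ) := by exact_mod_cast h
    have h5 : (0:ℝ) < β ^ (-(j+1:ℤ)) := zpow_pos hβ0 _
    have h6 : β ^ (-(j:ℤ)) = β ^ (-(j+1:ℤ)) * β := by
      rw [← zpow_add_one₀ (ne_of_gt hβ0)]
      norm_num
    have h7 : (eps β x (j+1) : ℝ) * β ^ (-(j+1:ℤ)) > β ^ (-(j:ℤ)) * (betaT β)^[j] 1 := by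
      rw [h6]
      have := mul_lt_mul_of_pos_left (lt_of_lt_of_le h3 h4) h5
      nlinarith
    have := hx.2
    linarith
end dich

section lemC
variable {β : ℝ}

lemma zpow_split (hβ0 : (0:ℝ) < β) (a b c : ℤ) (h : a = b + c) :
    β ^ (-a) = β ^ (-b) * β ^ (-c) := by
  rw [← zpow_add₀ (ne_of_gt hβ0)]
  congr 1
  omega

/-- Main inequality: value of an admissible word of length m ≤ n is at most 1 - β^{-(m+Γ+1)}. -/
lemma lemC (hβ : 1 < β) (n Γ : ℕ)
    (hΓ : ∀ m, 1 ≤ m → m ≤ n → 0 < (betaT β)^[m] 1 →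
      β ^ (-(Γ+1:ℤ)) ≤ (betaT β)^[m] 1) :
    ∀ m, m ≤ n → ∀ ω : ℕ → ℤ, isAdmissible β m ω →
      (∑ i ∈ Finset.range m, (ω i : ℝ) * β ^ (-(i+1:ℤ))) + β ^ (-((m:ℤ)+Γ+1)) ≤ 1 := by
  have hβ0 : (0:ℝ) < β := by linarith
  intro m
  induction m using Nat.strong_induction_on with
  | _ m ih =>
    intro hmn ω hadm
    rcases Nat.eq_zero_or_pos m with rfl | hm1
    · simpa using zpow_neg_le_one hβ (Γ+1)
    obtain ⟨x, hx, hdig⟩ := hadm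
    rcases dichotomy hβ hx m with hall | ⟨j, hjm, heq, hlt⟩
    · -- all digits equal those of 1
      have hsum : ∑ i ∈ Finset.range m, (ω i : ℝ) * β ^ (-(i+1:ℤ)) =
          1 - β ^ (-(m:ℤ)) * (betaT β)^[m] 1 := by
        rw [Finset.sum_congr rfl (fun i hi => by
          rw [← hdig i (Finset.mem_range.1 hi), hall i (Finset.mem_range.1 hi)]), sum_one hβ0]
      rcases eq_or_lt_of_le (iter_nonneg (zero_le_one) m : (0:ℝ) ≤ (betaT β)^[m] 1) with hT0 | hTpos
      · -- T^m 1 = 0 : contradiction since then x ≥ 1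
        exfalso
        have h1 : ∑ i ∈ Finset.range m, (eps β x (i+1) : ℝ) * β ^ (-(i+1:ℤ)) ≤ x :=
          sum_le_self hβ0 hx.1 m
        have h2 : ∑ i ∈ Finset.range m, (eps β x (i+1) : ℝ) * β ^ (-(i+1:ℤ)) =
            ∑ i ∈ Finset.range m, (ω i : ℝ) * β ^ (-(i+1:ℤ)) :=
          Finset.sum_congr rfl (fun i hi => by rw [hdig i (Finset.mem_range.1 hi)])
        rw [h2, hsum, ← hT0] at h1
        simp at h1
        linarith [hx.2]
      · have hb := hΓ m hm1 hmn hTpos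
        rw [hsum]
        have h3 : (0:ℝ) < β ^ (-(m:ℤ)) := zpow_pos hβ0 _
        have h4 : β ^ (-((m:ℤ)+Γ+1)) = β ^ (-(m:ℤ)) * β ^ (-(Γ+1:ℤ)) :=
          zpow_split hβ0 _ _ _ (by ring)
        nlinarith
    · -- strict inequality at position j
      -- suffix word of length m - (j+1)
      set m' := m - (j+1) with hm'
      have hsuf : isAdmissible β m' (fun i => ω (j+1+i)) := by
        refine ⟨(betaT β)^[j+1] x, iter_mem hx (j+1), fun k hk => ?_⟩
        rw [eps_shift, hdig (j+1+k) (by omega)]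
      have IH := ih m' (by omega) (by omega) _ hsuf
      -- split the sum
      have hsplit : ∑ i ∈ Finset.range m, (ω i : ℝ) * β ^ (-(i+1:ℤ)) =
          (∑ i ∈ Finset.range j, (ω i : ℝ) * β ^ (-(i+1:ℤ))) + (ω j : ℝ) * β ^ (-(j+1:ℤ))
          + ∑ i ∈ Finset.Ico (j+1) m, (ω i : ℝ) * β ^ (-(i+1:ℤ)) := by
        rw [← Finset.sum_range_succ, Finset.sum_range_add_sum_Ico _ (by omega)]
      have hA : ∑ i ∈ Finset.range j, (ω i : ℝ) * β ^ (-(i+1:ℤ)) =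
          1 - β ^ (-(j:ℤ)) * (betaT β)^[j] 1 := by
        rw [Finset.sum_congr rfl (fun i hi => by
          have hij := Finset.mem_range.1 hi
          rw [← hdig i (by omega), heq i hij]), sum_one hβ0]
      have hB : (ω j : ℝ) ≤ (eps β 1 (j+1) : ℝ) - 1 := by
        have : ω j ≤ eps β 1 (j+1) - 1 := by
          rw [← hdig j hjm]; omega
        exact_mod_cast this
      have hC : ∑ i ∈ Finset.Ico (j+1) m, (ω i : ℝ) * β ^ (-(i+1:ℤ)) =
          β ^ (-(j+1:ℤ)) * ∑ i ∈ Finset.range m', (ω (j+1+i) : ℝ) * β ^ (-(i+1:ℤ)) := by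
        rw [Finset.sum_Ico_eq_sum_range, Finset.mul_sum]
        apply Finset.sum_congr rfl
        intro i hi
        have hz : β ^ (-((((j+1+i:ℕ)):ℤ)+1)) = β ^ (-(j+1:ℤ)) * β ^ (-(i+1:ℤ)) := by
          rw [← zpow_add₀ (ne_of_gt hβ0)]
          congr 1
          push_cast
          ring
        rw [hz]
        ring
      -- the digit relation at 1
      have hstep : (betaT β)^[j+1] 1 = β * (betaT β)^[j] 1 - eps β 1 (j+1) := iter_step β 1 j
      have hTnn : 0 ≤ (betaT β)^[j+1] 1 := iter_nonneg zero_le_one _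
      have hD : (eps β 1 (j+1) : ℝ) * β ^ (-(j+1:ℤ)) ≤ β ^ (-(j:ℤ)) * (betaT β)^[j] 1 := by
        have h6 : β ^ (-(j:ℤ)) = β ^ (-(j+1:ℤ)) * β := by
          rw [← zpow_add_one₀ (ne_of_gt hβ0)]
          norm_num
        rw [h6]
        have h5 : (0:ℝ) < β ^ (-(j+1:ℤ)) := zpow_pos hβ0 _
        nlinarith
      have hE : β ^ (-((m:ℤ)+Γ+1)) = β ^ (-(j+1:ℤ)) * β ^ (-((m':ℤ)+Γ+1)) := by
        apply zpow_split hβ0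
        have : (m':ℤ) = m - (j+1) := by omega
        rw [this]
        ring
      have h5 : (0:ℝ) < β ^ (-(j+1:ℤ)) := zpow_pos hβ0 _
      rw [hsplit, hA, hC, hE]
      nlinarith [IH, hB, hD, h5]
end lemC

section cyl
variable {β : ℝ}

lemma cylinder_eq (hβ : 1 < β) (n Γ : ℕ) (hn : 1 ≤ n)
    (hΓ : ∀ m, 1 ≤ m → m ≤ n → 0 < (betaT β)^[m] 1 →
      β ^ (-(Γ+1:ℤ)) ≤ (betaT β)^[m] 1)
    (ω : ℕ → ℤ) (hadm : isAdmissible β n ω) :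
    _root_.cylinder β (n+Γ+1) (fun k => if k < n then ω k else 0) =
      Set.Ico (∑ i ∈ Finset.range n, (ω i : ℝ) * β ^ (-(i+1:ℤ)))
        ((∑ i ∈ Finset.range n, (ω i : ℝ) * β ^ (-(i+1:ℤ))) + β ^ (-((n:ℤ)+Γ+1))) := by
  have hβ0 : (0:ℝ) < β := by linarith
  set N := n + Γ + 1 with hN
  set ω' : ℕ → ℤ := fun k => if k < n then ω k else 0 with hω'
  set p : ℝ := ∑ i ∈ Finset.range n, (ω i : ℝ) * β ^ (-(i+1:ℤ)) with hp
  obtain ⟨x₀, hx₀, hd₀⟩ := hadm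
  have hωnn : ∀ k < n, 0 ≤ ω k := fun k hk => by
    rw [← hd₀ k hk]; exact eps_nonneg hβ0 hx₀.1 k
  have hω'nn : ∀ k, 0 ≤ ω' k := fun k => by
    by_cases hkn : k < n
    · simpa [hω', hkn] using hωnn k hkn
    · simp [hω', hkn]
  -- truncated partial sums
  have htrunc : ∀ k, n ≤ k →
      ∑ i ∈ Finset.range k, (ω' i : ℝ) * β ^ (-(i+1:ℤ)) = p := by
    intro k hk
    rw [← Finset.sum_range_add_sum_Ico _ hk]
    have h1 : ∑ i ∈ Finset.Ico n k, (ω' i : ℝ) * β ^ (-(i+1:ℤ)) = 0 := by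
      apply Finset.sum_eq_zero
      intro i hi
      have : ¬ i < n := by
        have := (Finset.mem_Ico.1 hi).1; omega
      simp [hω', this]
    have h2 : ∑ i ∈ Finset.range n, (ω' i : ℝ) * β ^ (-(i+1:ℤ)) = p := by
      apply Finset.sum_congr rfl
      intro i hi
      have : i < n := Finset.mem_range.1 hi
      simp [hω', this]
    rw [h1, h2, add_zero]
  have hmono : ∀ k, ∑ i ∈ Finset.range k, (ω' i : ℝ) * β ^ (-(i+1:ℤ)) ≤ p := by
    intro k
    by_cases hk : n ≤ k
    · rw [htrunc k hk]
    · push_neg at hk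
      have h2 : ∑ i ∈ Finset.range k, (ω' i : ℝ) * β ^ (-(i+1:ℤ)) =
          ∑ i ∈ Finset.range k, (ω i : ℝ) * β ^ (-(i+1:ℤ)) := by
        apply Finset.sum_congr rfl
        intro i hi
        have : i < n := by have := Finset.mem_range.1 hi; omega
        simp [hω', this]
      rw [h2, hp, ← Finset.sum_range_add_sum_Ico _ hk.le]
      have : 0 ≤ ∑ i ∈ Finset.Ico k n, (ω i : ℝ) * β ^ (-(i+1:ℤ)) := by
        apply Finset.sum_nonneg
        intro i hi
        have hin := Finset.mem_Ico.1 hi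
        have := hωnn i hin.2
        positivity
      linarith
  have hp0 : 0 ≤ p := by
    rw [hp]
    apply Finset.sum_nonneg
    intro i hi
    have := hωnn i (Finset.mem_range.1 hi)
    positivity
  have hNn : n ≤ N := by omega
  have hfull : p + β ^ (-((n:ℤ)+Γ+1)) ≤ 1 := lemC hβ n Γ hΓ n le_rfl ω ⟨x₀, hx₀, hd₀⟩
  ext x
  simp only [_root_.cylinder, Set.mem_setOf_eq, Set.mem_Ico]
  constructor
  · rintro ⟨hx, hd⟩
    have hform := iter_formula β x hβ0 N
    have hS : ∑ i ∈ Finset.range N, (eps β x (i+1) : ℝ) * β ^ (-(i+1:ℤ)) = p := by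
      rw [Finset.sum_congr rfl (fun i hi => by
        rw [hd i (Finset.mem_range.1 hi)]), htrunc N hNn]
    rw [hS] at hform
    have hmem := iter_mem (β := β) hx N
    have hzp : (0:ℝ) < β ^ (N:ℤ) := zpow_pos hβ0 _
    have hxp : x - p = β ^ (-(N:ℤ)) * (betaT β)^[N] x := by
      rw [hform, ← mul_assoc, ← zpow_add₀ (ne_of_gt hβ0),
        show (-(N:ℤ) + N) = 0 by ring, zpow_zero, one_mul]
    have hzn : (0:ℝ) < β ^ (-(N:ℤ)) := zpow_pos hβ0 _
    constructor
    · nlinarith [hmem.1, hxp]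
    · have h1 : x - p < β ^ (-(N:ℤ)) := by
        calc x - p = β ^ (-(N:ℤ)) * (betaT β)^[N] x := hxp
        _ < β ^ (-(N:ℤ)) * 1 := by
            apply mul_lt_mul_of_pos_left hmem.2 hzn
        _ = β ^ (-(N:ℤ)) := by ring
      have hcast : β ^ (-(N:ℤ)) = β ^ (-((n:ℤ)+Γ+1)) := by
        have he : (-(N:ℤ)) = (-((n:ℤ)+Γ+1)) := by omega
        rw [he]
      linarith [hcast ▸ h1]
  · rintro ⟨hpx, hxp⟩
    have hcast : β ^ (-((n:ℤ)+Γ+1)) = β ^ (-(N:ℤ)) := by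
      have he : (-((n:ℤ)+Γ+1)) = (-(N:ℤ)) := by omega
      rw [he]
    rw [hcast] at hxp
    have hx01 : x ∈ Set.Ico (0:ℝ) 1 := by
      constructor
      · linarith
      · have : β ^ (-(N:ℤ)) = β ^ (-((n:ℤ)+Γ+1)) := hcast.symm
        linarith [this ▸ hfull]
    refine ⟨hx01, ?_⟩
    -- prove digits by strong induction
    have claim : ∀ k, k ≤ N → ∀ i < k, eps β x (i+1) = ω' i := by
      intro k
      induction k with
      | zero => intro _ i hi; exact absurd hi (Nat.not_lt_zero i)
      | succ k ihk =>
        intro hkN i hik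
        have ihk' := ihk (by omega)
        rcases Nat.lt_or_ge i k with h | h
        · exact ihk' i h
        have hik' : i = k := by omega
        subst hik'
        -- compute the next digit
        have hform := iter_formula β x hβ0 i
        have hS : ∑ l ∈ Finset.range i, (eps β x (l+1) : ℝ) * β ^ (-(l+1:ℤ)) =
            ∑ l ∈ Finset.range i, (ω' l : ℝ) * β ^ (-(l+1:ℤ)) :=
          Finset.sum_congr rfl (fun l hl => by rw [ihk' l (Finset.mem_range.1 hl)])
        rw [hS] at hform
        set S := ∑ l ∈ Finset.range i, (ω' l : ℝ) * β ^ (-(l+1:ℤ)) with hSS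
        set S' := ∑ l ∈ Finset.range (i+1), (ω' l : ℝ) * β ^ (-(l+1:ℤ)) with hSS'
        have hS'def : S' = S + (ω' i : ℝ) * β ^ (-(i+1:ℤ)) := Finset.sum_range_succ _ _
        set Q : ℝ := β ^ ((i:ℤ)+1) * (x - S') with hQ
        have hq1 : β * (betaT β)^[i] x = Q + (ω' i : ℝ) := by
          rw [hform, hQ, hS'def]
          have h1 : β * β ^ (i:ℤ) = β ^ ((i:ℤ)+1) := by
            rw [zpow_add_one₀ (ne_of_gt hβ0)]; ring
          have h2 : β ^ ((i:ℤ)+1) * β ^ (-(i+1:ℤ)) = 1 := by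
            rw [← zpow_add₀ (ne_of_gt hβ0)]
            convert zpow_zero β using 2
            push_cast
            ring
          calc β * (β ^ (i:ℤ) * (x - S)) = β ^ ((i:ℤ)+1) * (x - S) := by rw [← h1]; ring
          _ = β ^ ((i:ℤ)+1) * (x - (S + (ω' i:ℝ) * β ^ (-(i+1:ℤ)))) +
              (β ^ ((i:ℤ)+1) * β ^ (-(i+1:ℤ))) * (ω' i : ℝ) := by ring
          _ = _ := by rw [h2]; ring
        have hQ0 : 0 ≤ Q := by
          have h1 : S' ≤ p := hmono (i+1)
          have h2 : (0:ℝ) < β ^ ((i:ℤ)+1) := zpow_pos hβ0 _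
          nlinarith
        have hQ1 : Q < 1 := by
          have h2 : (0:ℝ) < β ^ ((i:ℤ)+1) := zpow_pos hβ0 _
          by_cases hin : n ≤ i + 1
          · -- S' = p
            have h3 : S' = p := htrunc (i+1) hin
            have h4 : Q < β ^ ((i:ℤ)+1) * β ^ (-(N:ℤ)) := by
              rw [hQ, h3]
              apply mul_lt_mul_of_pos_left _ h2
              linarith
            have h5 : β ^ ((i:ℤ)+1) * β ^ (-(N:ℤ)) = β ^ ((i:ℤ)+1-N) := by
              rw [← zpow_add₀ (ne_of_gt hβ0), sub_eq_add_neg]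
            have h6 : β ^ ((i:ℤ)+1-(N:ℤ)) ≤ 1 := by
              apply zpow_le_one_of_nonpos₀ hβ.le
              omega
            linarith [h5 ▸ h4]
          · -- i + 1 < n : use lemC on the suffix
            push_neg at hin
            set m' := n - (i+1) with hm'
            have hsuf : isAdmissible β m' (fun l => ω (i+1+l)) := by
              refine ⟨(betaT β)^[i+1] x₀, iter_mem hx₀ (i+1), fun l hl => ?_⟩
              rw [eps_shift, hd₀ (i+1+l) (by omega)]
            have hV := lemC hβ n Γ hΓ m' (by omega) _ hsuf
            set V := ∑ l ∈ Finset.range m', ((ω (i+1+l) : ℝ)) * β ^ (-(l+1:ℤ)) with hVV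
            -- p - S' = β^{-(i+1)} V
            have hS'n : S' = ∑ l ∈ Finset.range (i+1), (ω l : ℝ) * β ^ (-(l+1:ℤ)) := by
              apply Finset.sum_congr rfl
              intro l hl
              have : l < n := by have := Finset.mem_range.1 hl; omega
              simp [hω', this]
            have hsplit2 : p = S' + ∑ l ∈ Finset.Ico (i+1) n, (ω l : ℝ) * β ^ (-(l+1:ℤ)) := by
              rw [hp, ← Finset.sum_range_add_sum_Ico _ (le_of_lt hin), ← hS'n]
            have hIco : ∑ l ∈ Finset.Ico (i+1) n, (ω l : ℝ) * β ^ (-(l+1:ℤ)) =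
                β ^ (-(i+1:ℤ)) * V := by
              rw [Finset.sum_Ico_eq_sum_range, hVV, Finset.mul_sum, ← hm']
              apply Finset.sum_congr rfl
              intro l hl
              rw [show β ^ (-((((i+1+l:ℕ)):ℤ)+1)) = β ^ (-(i+1:ℤ)) * β ^ (-(l+1:ℤ)) from by
                rw [← zpow_add₀ (ne_of_gt hβ0)]; congr 1; push_cast; ring]
              ring
            have hps : p - S' = β ^ (-(i+1:ℤ)) * V := by
              rw [hsplit2, hIco]
              ring
            have h4 : Q < β ^ ((i:ℤ)+1) * (β ^ (-(i+1:ℤ)) * V + β ^ (-(N:ℤ))) := by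
              rw [hQ]
              apply mul_lt_mul_of_pos_left _ h2
              linarith [hps]
            have h5 : β ^ ((i:ℤ)+1) * β ^ (-(i+1:ℤ)) = 1 := by
              rw [← zpow_add₀ (ne_of_gt hβ0)]
              convert zpow_zero β using 2
              push_cast
              ring
            have h6 : β ^ ((i:ℤ)+1) * β ^ (-(N:ℤ)) = β ^ (-((m':ℤ)+Γ+1)) := by
              rw [← zpow_add₀ (ne_of_gt hβ0)]
              congr 1
              have : (m':ℤ) = n - (i+1) := by omega
              rw [this]
              push_cast [hN]
              ring
            have h7 : Q < V + β ^ (-((m':ℤ)+Γ+1)) := by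
              have := h4
              rw [mul_add, ← mul_assoc, h5, one_mul, h6] at this
              exact this
            linarith
        -- conclude the digit value
        have : eps β x (i+1) = ⌊β * (betaT β)^[i] x⌋ := eps_succ β x i
        rw [this, hq1]
        rw [Int.floor_eq_iff]
        constructor
        · push_cast; linarith
        · push_cast; linarith
    exact claim N le_rfl
end cyl

theorem stmt16 (β : ℝ) (hβ : 1 < β) (n : ℕ) (hn : 1 ≤ n) :
    (∀ m : ℕ, 1 ≤ m → m ≤ n →
      BddAbove {k : ℕ | ∀ i < k, epsStar β (m + i + 1) = 0}) ∧
    ∀ ω : ℕ → ℤ, isAdmissible β n ω →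
      isFull β
        (n + ((Finset.Icc 1 n).sup fun m =>
          sSup {k : ℕ | ∀ i < k, epsStar β (m + i + 1) = 0}) + 1)
        (fun k => if k < n then ω k else 0) := by
  constructor
  · intro m hm _
    exact bddAbove_S hβ m hm
  · intro ω hadm
    set Γ := (Finset.Icc 1 n).sup (fun m =>
      sSup {k : ℕ | ∀ i < k, epsStar β (m + i + 1) = 0}) with hΓdef
    have hΓ : ∀ m, 1 ≤ m → m ≤ n → 0 < (betaT β)^[m] 1 →
        β ^ (-(Γ+1:ℤ)) ≤ (betaT β)^[m] 1 := by
      intro m hm1 hmn hpos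
      obtain ⟨i0, hi0S, hb⟩ := key_lemma hβ m hm1 hpos
      have h1 : i0 ≤ sSup {k : ℕ | ∀ i < k, epsStar β (m + i + 1) = 0} :=
        le_csSup (bddAbove_S hβ m hm1) hi0S
      have h2 : sSup {k : ℕ | ∀ i < k, epsStar β (m + i + 1) = 0} ≤ Γ :=
        Finset.le_sup (f := fun m =>
          sSup {k : ℕ | ∀ i < k, epsStar β (m + i + 1) = 0}) (Finset.mem_Icc.2 ⟨hm1, hmn⟩)
      have h3 : i0 ≤ Γ := le_trans h1 h2
      calc β ^ (-(Γ+1:ℤ)) ≤ β ^ (-(i0+1:ℤ)) := zpow_neg_anti hβ (by omega)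
      _ ≤ _ := hb
    have hcyl := cylinder_eq hβ n Γ hn hΓ ω hadm
    unfold isFull
    rw [hcyl, Real.volume_Ico]
    rw [show (∑ i ∈ Finset.range n, (ω i : ℝ) * β ^ (-(i+1:ℤ))) + β ^ (-((n:ℤ)+Γ+1))
        - (∑ i ∈ Finset.range n, (ω i : ℝ) * β ^ (-(i+1:ℤ))) = β ^ (-((n:ℤ)+Γ+1)) by ring]
    rw [show (-((n:ℤ)+Γ+1)) = (-((n + Γ + 1 : ℕ) : ℤ)) from by omega]
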